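/- Under the projection π onto the hyperplane H = {v ∈ ℝ^n : ⟨v,ε_ℓ⟩ = ⌈k/(2n)⌉} (identified with ℝ^{n−1}), the image of any distinguished alcove of the type C_n arrangement whose coroot lattice point lies on H and corresponds to a symmetric (2n)-core with first part k is a distinguished alcove of the type C_{n−1} arrangement. -/

import Mathlib

/-! The affine hyperplane arrangement of type `Cₙ` in `ℝⁿ = Fin n → ℝ`. -/

noncomputable def dotp (n : ℕ) (x y : Fin n → ℝ) : ℝ := ∑ i, x i * y i

def stdBasis (n : ℕ) (i : Fin n) : Fin n → ℝ := fun j => if j = i then 1 else 0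

/-- The positive roots of type `Cₙ`: `2εᵢ` and `εᵢ ± εⱼ` for `i < j`. -/
def PosRoot (n : ℕ) : Set (Fin n → ℝ) :=
  {α | (∃ i, α = (2 : ℝ) • stdBasis n i) ∨
       (∃ i j : Fin n, i < j ∧ (α = stdBasis n i + stdBasis n j ∨ α = stdBasis n i - stdBasis n j))}

/-- The complement of the affine arrangement `{x : (x, α) = m}`, `α` a positive root, `m ∈ ℤ`. -/
def ArrComp (n : ℕ) : Set (Fin n → ℝ) :=
  {x | ∀ α ∈ PosRoot n, ∀ m : ℤ, dotp n x α ≠ (m : ℝ)}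

/-- An alcove is a connected component of the complement of the arrangement. -/
def IsAlcove (n : ℕ) (A : Set (Fin n → ℝ)) : Prop :=
  ∃ x ∈ ArrComp n, A = connectedComponentIn (ArrComp n) x

/-- The translate by `p` of the fundamental region (the closed cube of side 1 around `p`). -/
def cube (n : ℕ) (p : Fin n → ℝ) : Set (Fin n → ℝ) := {x | ∀ i, |x i - p i| ≤ 1/2}

/-- The fundamental alcove: `0 < (x, α) < 1` for every positive root `α`. -/
def FundAlcove (n : ℕ) : Set (Fin n → ℝ) :=
  {x | ∀ α ∈ PosRoot n, 0 < dotp n x α ∧ dotp n x α < 1}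

/-- The hyperplane `{x : (x, α) = m}` separates `A` and `B`. -/
def Separates (n : ℕ) (α : Fin n → ℝ) (m : ℤ) (A B : Set (Fin n → ℝ)) : Prop :=
  ((∀ x ∈ A, dotp n x α < (m : ℝ)) ∧ (∀ x ∈ B, (m : ℝ) < dotp n x α)) ∨
  ((∀ x ∈ B, dotp n x α < (m : ℝ)) ∧ (∀ x ∈ A, (m : ℝ) < dotp n x α))

/-- The number of arrangement hyperplanes separating `A` from `B`. -/
noncomputable def sepCount (n : ℕ) (A B : Set (Fin n → ℝ)) : ℕ :=
  Nat.card {q : (Fin n → ℝ) × ℤ | q.1 ∈ PosRoot n ∧ Separates n q.1 q.2 A B}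

def rget (n : ℕ) (x : Fin n → ℝ) (i : ℕ) : ℝ := if h : i < n then x ⟨i, h⟩ else 0

/-- Orthogonal projection onto the hyperplane `{v : v (ℓ-1) = c}` (1-indexed coordinate `ℓ`). -/
def piMap (n : ℕ) (ℓ : ℕ) (c : ℝ) (x : Fin n → ℝ) : Fin n → ℝ :=
  fun j => if j.val = ℓ - 1 then c else x j

/-- Identification of the hyperplane with `ℝⁿ⁻¹` via the basis `{εⱼ : j ≠ ℓ}`:
delete the (1-indexed) `ℓ`-th coordinate. -/
def delCoordR (n : ℕ) (ℓ : ℕ) (x : Fin n → ℝ) : Fin (n-1) → ℝ :=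
  fun t => rget n x (if t.val < ℓ - 1 then t.val else t.val + 1)

/-- Points of the open chain region `1/2 > x₀ > x₁ > ⋯ > x_{n-1} > 0`. -/
def ChainSet (n : ℕ) : Set (Fin n → ℝ) :=
  {x | rget n x 0 < 1/2 ∧ (∀ i j : Fin n, i < j → x j < x i) ∧ 0 < rget n x (n-1)}

-- ======================= my auxiliary material =======================

open Classical

section Aux

/-- ±1 from a Bool. -/
def sval (b : Bool) : ℝ := if b then 1 else -1

lemma sval_sq (b : Bool) : sval b * sval b = 1 := by cases b <;> simp [sval]

lemma sval_abs (b : Bool) (r : ℝ) : |sval b * r| = |r| := by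
  cases b <;> simp [sval, abs_neg]

lemma dotp_smul2 (n : ℕ) (x : Fin n → ℝ) (i : Fin n) :
    dotp n x ((2 : ℝ) • stdBasis n i) = 2 * x i := by
  unfold dotp stdBasis
  rw [Finset.sum_eq_single i]
  · simp; ring
  · intro b _ hb; simp [hb]
  · simp

lemma dotp_addBasis (n : ℕ) (x : Fin n → ℝ) (i j : Fin n) (h : i ≠ j) :
    dotp n x (stdBasis n i + stdBasis n j) = x i + x j := by
  unfold dotp stdBasis
  have : ∀ b : Fin n, x b * ((fun t => if t = i then (1:ℝ) else 0) b
      + (fun t => if t = j then (1:ℝ) else 0) b)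
      = (if b = i then x i else 0) + (if b = j then x j else 0) := by
    intro b
    by_cases hbi : b = i <;> by_cases hbj : b = j <;> simp_all <;> ring
  simp only [Pi.add_apply]
  rw [Finset.sum_congr rfl (fun b _ => this b), Finset.sum_add_distrib]
  simp

lemma dotp_subBasis (n : ℕ) (x : Fin n → ℝ) (i j : Fin n) (h : i ≠ j) :
    dotp n x (stdBasis n i - stdBasis n j) = x i - x j := by
  unfold dotp stdBasis
  have : ∀ b : Fin n, x b * ((fun t => if t = i then (1:ℝ) else 0) b
      - (fun t => if t = j then (1:ℝ) else 0) b)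
      = (if b = i then x i else 0) - (if b = j then x j else 0) := by
    intro b
    by_cases hbi : b = i <;> by_cases hbj : b = j <;> simp_all <;> ring
  simp only [Pi.sub_apply]
  rw [Finset.sum_congr rfl (fun b _ => this b), Finset.sum_sub_distrib]
  simp

end Aux

section Reg
variable {m : ℕ}

/-- The open region (alcove) in the cube around `p` determined by sign data `s`
and ordering template `q`. -/
def Reg (m : ℕ) (p : Fin m → ℤ) (s : Fin m → Bool) (q : Fin m → ℝ) : Set (Fin m → ℝ) :=
  {x | (∀ i, 0 < sval (s i) * (x i - (p i : ℝ)) ∧ sval (s i) * (x i - (p i : ℝ)) < 1/2) ∧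
       (∀ i j, q i < q j → sval (s i) * (x i - (p i : ℝ)) < sval (s j) * (x j - (p j : ℝ)))}

/-- Floor values of the root functionals on `Reg`. -/
def T2 (p : Fin m → ℤ) (s : Fin m → Bool) (i : Fin m) : ℤ :=
  2 * p i - (if s i then 0 else 1)

noncomputable def Tsum (p : Fin m → ℤ) (s : Fin m → Bool) (q : Fin m → ℝ) (i j : Fin m) : ℤ :=
  p i + p j - (if (if q i < q j then s j else s i) then 0 else 1)

noncomputable def Tdiff (p : Fin m → ℤ) (s : Fin m → Bool) (q : Fin m → ℝ) (i j : Fin m) : ℤ :=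
  p i - p j - (if (if q i < q j then !(s j) else s i) then 0 else 1)

variable {p : Fin m → ℤ} {s : Fin m → Bool} {q : Fin m → ℝ}

lemma T2_lt {x : Fin m → ℝ} (hx : x ∈ Reg m p s q) (i : Fin m) :
    (T2 p s i : ℝ) < 2 * x i ∧ 2 * x i < T2 p s i + 1 := by
  obtain ⟨h1, _⟩ := hx
  obtain ⟨ha, hb⟩ := h1 i
  unfold T2
  cases hsi : s i <;> simp [hsi, sval] at ha hb ⊢ <;> push_cast <;> constructor <;> nlinarith

lemma Tsum_lt (hq : Function.Injective q) {x : Fin m → ℝ} (hx : x ∈ Reg m p s q)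
    (i j : Fin m) (hij : i ≠ j) :
    (Tsum p s q i j : ℝ) < x i + x j ∧ x i + x j < Tsum p s q i j + 1 := by
  obtain ⟨h1, h2⟩ := hx
  obtain ⟨ha, hb⟩ := h1 i
  obtain ⟨hc, hd⟩ := h1 j
  unfold Tsum
  have hqij : q i ≠ q j := fun h => hij (hq h)
  rcases lt_or_gt_of_ne hqij with hlt | hgt
  · have horder := h2 i j hlt
    simp only [if_pos hlt]
    cases hsj : s j <;> cases hsi : s i <;>
      simp [hsj, hsi, sval] at ha hb hc hd horder ⊢ <;> push_cast <;> constructor <;> nlinarith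
  · have horder := h2 j i hgt
    simp only [if_neg (not_lt_of_gt hgt)]
    cases hsj : s j <;> cases hsi : s i <;>
      simp [hsj, hsi, sval] at ha hb hc hd horder ⊢ <;> push_cast <;> constructor <;> nlinarith

lemma Tdiff_lt (hq : Function.Injective q) {x : Fin m → ℝ} (hx : x ∈ Reg m p s q)
    (i j : Fin m) (hij : i ≠ j) :
    (Tdiff p s q i j : ℝ) < x i - x j ∧ x i - x j < Tdiff p s q i j + 1 := by
  obtain ⟨h1, h2⟩ := hx
  obtain ⟨ha, hb⟩ := h1 i
  obtain ⟨hc, hd⟩ := h1 j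
  unfold Tdiff
  have hqij : q i ≠ q j := fun h => hij (hq h)
  rcases lt_or_gt_of_ne hqij with hlt | hgt
  · have horder := h2 i j hlt
    simp only [if_pos hlt]
    cases hsj : s j <;> cases hsi : s i <;>
      simp [hsj, hsi, sval] at ha hb hc hd horder ⊢ <;> push_cast <;> constructor <;> nlinarith
  · have horder := h2 j i hgt
    simp only [if_neg (not_lt_of_gt hgt)]
    cases hsj : s j <;> cases hsi : s i <;>
      simp [hsj, hsi, sval] at ha hb hc hd horder ⊢ <;> push_cast <;> constructor <;> nlinarith

end Reg

section Geo
variable {m : ℕ} {p : Fin m → ℤ} {s : Fin m → Bool} {q : Fin m → ℝ}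

lemma two_mem_posRoot (i : Fin m) : ((2 : ℝ) • stdBasis m i) ∈ PosRoot m := Or.inl ⟨i, rfl⟩

lemma arr_two_ne {x : Fin m → ℝ} (hx : x ∈ ArrComp m) (i : Fin m) (a : ℤ) :
    2 * x i ≠ (a : ℝ) := by
  have := hx _ (two_mem_posRoot i) a
  rwa [dotp_smul2] at this

lemma arr_sum_ne {x : Fin m → ℝ} (hx : x ∈ ArrComp m) {i j : Fin m} (hij : i ≠ j) (a : ℤ) :
    x i + x j ≠ (a : ℝ) := by
  rcases lt_or_gt_of_ne hij with h | h
  · have := hx _ (Or.inr ⟨i, j, h, Or.inl rfl⟩) a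
    rwa [dotp_addBasis m x i j hij] at this
  · have := hx _ (Or.inr ⟨j, i, h, Or.inl rfl⟩) a
    rw [dotp_addBasis m x j i hij.symm] at this
    intro hcon; exact this (by linarith)
  
lemma arr_diff_ne {x : Fin m → ℝ} (hx : x ∈ ArrComp m) {i j : Fin m} (hij : i ≠ j) (a : ℤ) :
    x i - x j ≠ (a : ℝ) := by
  rcases lt_or_gt_of_ne hij with h | h
  · have := hx _ (Or.inr ⟨i, j, h, Or.inr rfl⟩) a
    rwa [dotp_subBasis m x i j hij] at this
  · have := hx _ (Or.inr ⟨j, i, h, Or.inr rfl⟩) (-a)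
    rw [dotp_subBasis m x j i hij.symm] at this
    intro hcon
    apply this
    push_cast
    linarith

lemma sval_cancel (b : Bool) (r : ℝ) : sval b * (sval b * r) = r := by
  rw [← mul_assoc, sval_sq, one_mul]

lemma isOpen_reg : IsOpen (Reg m p s q) := by
  have hzc : ∀ i : Fin m, Continuous (fun x : Fin m → ℝ => sval (s i) * (x i - (p i : ℝ))) :=
    fun i => continuous_const.mul ((continuous_apply i).sub continuous_const)
  have hrw : Reg m p s q =
      (⋂ i, ({x : Fin m → ℝ | 0 < sval (s i) * (x i - (p i : ℝ))} ∩
             {x : Fin m → ℝ | sval (s i) * (x i - (p i : ℝ)) < 1/2})) ∩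
      ⋂ i, ⋂ j, {x : Fin m → ℝ | q i < q j →
          sval (s i) * (x i - (p i : ℝ)) < sval (s j) * (x j - (p j : ℝ))} := by
    ext x
    simp only [Reg, Set.mem_setOf_eq, Set.mem_inter_iff, Set.mem_iInter, Set.mem_setOf_eq]
  rw [hrw]
  apply IsOpen.inter
  · exact isOpen_iInter_of_finite fun i =>
      (isOpen_lt continuous_const (hzc i)).inter (isOpen_lt (hzc i) continuous_const)
  · refine isOpen_iInter_of_finite fun i => isOpen_iInter_of_finite fun j => ?_
    by_cases h : q i < q j
    · simp only [h, true_implies]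
      exact isOpen_lt (hzc i) (hzc j)
    · have : {x : Fin m → ℝ | q i < q j →
          sval (s i) * (x i - (p i : ℝ)) < sval (s j) * (x j - (p j : ℝ))} = Set.univ := by
        ext x; simp [h]
      rw [this]; exact isOpen_univ

private lemma cvx_lt {a b u v u' v' : ℝ} (ha : 0 ≤ a) (hb : 0 ≤ b) (hab : a + b = 1)
    (h1 : u < u') (h2 : v < v') : a*u + b*v < a*u' + b*v' := by
  rcases eq_or_lt_of_le ha with rfl | hpos
  · have hb1 : b = 1 := by linarith
    simp [hb1]; linarith
  · have h3 : a*u < a*u' := by nlinarith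
    have h4 : b*v ≤ b*v' := by nlinarith
    linarith

lemma convex_reg : Convex ℝ (Reg m p s q) := by
  intro x hx y hy a b ha hb hab
  have key : ∀ i : Fin m, sval (s i) * ((a • x + b • y) i - (p i : ℝ)) =
      a * (sval (s i) * (x i - (p i : ℝ))) + b * (sval (s i) * (y i - (p i : ℝ))) := by
    intro i
    simp only [Pi.add_apply, Pi.smul_apply, smul_eq_mul]
    have : (p i : ℝ) = a * (p i : ℝ) + b * (p i : ℝ) := by rw [← add_mul, hab, one_mul]
    linear_combination (- sval (s i)) * this
  constructor
  · intro i
    rw [key i]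
    obtain ⟨h1, h2⟩ := hx.1 i
    obtain ⟨h3, h4⟩ := hy.1 i
    constructor
    · have := cvx_lt ha hb hab h1 h3; simpa using this
    · have := cvx_lt ha hb hab h2 h4; linarith [this, (by ring : a*(1/2) + b*(1/2) = (a+b)*(1/2))]
  · intro i j hij
    rw [key i, key j]
    exact cvx_lt ha hb hab (hx.2 i j hij) (hy.2 i j hij)

lemma reg_subset_arrComp (hq : Function.Injective q) : Reg m p s q ⊆ ArrComp m := by
  intro x hx α hα a
  rcases hα with ⟨i, rfl⟩ | ⟨i, j, hij, rfl | rfl⟩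
  · rw [dotp_smul2]
    intro h
    obtain ⟨h1, h2⟩ := T2_lt hx i
    rw [h] at h1 h2
    have h1' : T2 p s i < a := by exact_mod_cast h1
    have h2' : a < T2 p s i + 1 := by exact_mod_cast h2
    omega
  · rw [dotp_addBasis m x i j hij.ne]
    intro h
    obtain ⟨h1, h2⟩ := Tsum_lt hq hx i j hij.ne
    rw [h] at h1 h2
    have h1' : Tsum p s q i j < a := by exact_mod_cast h1
    have h2' : a < Tsum p s q i j + 1 := by exact_mod_cast h2
    omega
  · rw [dotp_subBasis m x i j hij.ne]
    intro h
    obtain ⟨h1, h2⟩ := Tdiff_lt hq hx i j hij.ne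
    rw [h] at h1 h2
    have h1' : Tdiff p s q i j < a := by exact_mod_cast h1
    have h2' : a < Tdiff p s q i j + 1 := by exact_mod_cast h2
    omega

/-- The weak closure of the region. -/
def wReg (m : ℕ) (p : Fin m → ℤ) (s : Fin m → Bool) (q : Fin m → ℝ) : Set (Fin m → ℝ) :=
  {x | (∀ i, 0 ≤ sval (s i) * (x i - (p i : ℝ)) ∧ sval (s i) * (x i - (p i : ℝ)) ≤ 1/2) ∧
       (∀ i j, q i < q j → sval (s i) * (x i - (p i : ℝ)) ≤ sval (s j) * (x j - (p j : ℝ)))}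

lemma isClosed_wReg : IsClosed (wReg m p s q) := by
  have hzc : ∀ i : Fin m, Continuous (fun x : Fin m → ℝ => sval (s i) * (x i - (p i : ℝ))) :=
    fun i => continuous_const.mul ((continuous_apply i).sub continuous_const)
  have hrw : wReg m p s q =
      (⋂ i, ({x : Fin m → ℝ | 0 ≤ sval (s i) * (x i - (p i : ℝ))} ∩
             {x : Fin m → ℝ | sval (s i) * (x i - (p i : ℝ)) ≤ 1/2})) ∩
      ⋂ i, ⋂ j, {x : Fin m → ℝ | q i < q j →
          sval (s i) * (x i - (p i : ℝ)) ≤ sval (s j) * (x j - (p j : ℝ))} := by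
    ext x
    simp only [wReg, Set.mem_setOf_eq, Set.mem_inter_iff, Set.mem_iInter, Set.mem_setOf_eq]
  rw [hrw]
  apply IsClosed.inter
  · exact isClosed_iInter fun i =>
      (isClosed_le continuous_const (hzc i)).inter (isClosed_le (hzc i) continuous_const)
  · refine isClosed_iInter fun i => isClosed_iInter fun j => ?_
    by_cases h : q i < q j
    · simp only [h, true_implies]
      exact isClosed_le (hzc i) (hzc j)
    · have : {x : Fin m → ℝ | q i < q j →
          sval (s i) * (x i - (p i : ℝ)) ≤ sval (s j) * (x j - (p j : ℝ))} = Set.univ := by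
        ext x; simp [h]
      rw [this]; exact isClosed_univ

lemma closure_reg_subset : closure (Reg m p s q) ⊆ wReg m p s q := by
  apply closure_minimal _ isClosed_wReg
  intro x hx
  exact ⟨fun i => ⟨(hx.1 i).1.le, (hx.1 i).2.le⟩, fun i j h => (hx.2 i j h).le⟩

lemma wReg_arr_subset_reg (hq : Function.Injective q) :
    wReg m p s q ∩ ArrComp m ⊆ Reg m p s q := by
  rintro x ⟨hw, hx⟩
  have hz : ∀ i, x i - (p i : ℝ) = sval (s i) * (sval (s i) * (x i - (p i : ℝ))) := by
    intro i; rw [sval_cancel]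
  constructor
  · intro i
    obtain ⟨h1, h2⟩ := hw.1 i
    constructor
    · rcases eq_or_lt_of_le h1 with heq | h
      · exfalso
        have : x i = (p i : ℝ) := by
          have := hz i
          rw [← heq, mul_zero] at this
          linarith
        exact arr_two_ne hx i (2 * p i) (by rw [this]; push_cast; ring)
      · exact h
    · rcases eq_or_lt_of_le h2 with heq | h
      · exfalso
        have hxi : x i = (p i : ℝ) + sval (s i) * (1/2) := by
          have := hz i
          rw [heq] at this
          linarith
        apply arr_two_ne hx i (2 * p i + (if s i then 1 else -1))
        rw [hxi]
        cases hsi : s i <;> simp [sval, hsi] <;> push_cast <;> ring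
      · exact h
  · intro i j hij
    have hijne : i ≠ j := fun h => absurd (congrArg q h) (ne_of_lt hij)
    rcases eq_or_lt_of_le (hw.2 i j hij) with heq | h
    · exfalso
      set z := sval (s j) * (x j - (p j : ℝ)) with hzdef
      have hxi : x i - (p i : ℝ) = sval (s i) * z := by
        have h := hz i
        rw [heq] at h
        exact h
      have hxj : x j - (p j : ℝ) = sval (s j) * z := hz j
      by_cases hss : s i = s j
      · apply arr_diff_ne hx hijne (p i - p j)
        rw [hss] at hxi
        push_cast
        linarith [hxi, hxj]
      · apply arr_sum_ne hx hijne (p i + p j)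
        have : sval (s i) = - sval (s j) := by
          cases hsi : s i <;> cases hsj : s j
          · exact absurd (hsi.trans hsj.symm) hss
          · simp [sval]
          · simp [sval]
          · exact absurd (hsi.trans hsj.symm) hss
        rw [this] at hxi
        push_cast
        linarith [hxi, hxj]
    · exact h

lemma reg_component (hq : Function.Injective q) {x : Fin m → ℝ} (hx : x ∈ Reg m p s q) :
    connectedComponentIn (ArrComp m) x = Reg m p s q := by
  have hxarr : x ∈ ArrComp m := reg_subset_arrComp hq hx
  apply Set.Subset.antisymm
  · have hsub : connectedComponentIn (ArrComp m) x ⊆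
        Reg m p s q ∪ (closure (Reg m p s q))ᶜ := by
      intro y hy
      have hyarr : y ∈ ArrComp m := connectedComponentIn_subset _ _ hy
      by_cases hcl : y ∈ closure (Reg m p s q)
      · exact Or.inl (wReg_arr_subset_reg hq ⟨closure_reg_subset hcl, hyarr⟩)
      · exact Or.inr hcl
    have hpre : IsPreconnected (connectedComponentIn (ArrComp m) x) :=
      isPreconnected_connectedComponentIn
    have hne : (connectedComponentIn (ArrComp m) x ∩ Reg m p s q).Nonempty :=
      ⟨x, mem_connectedComponentIn hxarr, hx⟩
    have hdisj : Reg m p s q ∩ (closure (Reg m p s q))ᶜ = ∅ := by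
      apply Set.eq_empty_of_forall_notMem
      rintro y ⟨hy1, hy2⟩
      exact hy2 (subset_closure hy1)
    exact hpre.subset_left_of_subset_union isOpen_reg
      (isClosed_closure.isOpen_compl) (by rw [Set.disjoint_iff_inter_eq_empty]; exact hdisj)
      hsub hne
  · exact (convex_reg.isPreconnected).subset_connectedComponentIn hx
      (reg_subset_arrComp hq)

end Geo

section Cls
variable {m : ℕ} {p : Fin m → ℤ} {s : Fin m → Bool} {q : Fin m → ℝ}

/-- rank of `q i` among the values of `q`. -/
noncomputable def rnk (q : Fin m → ℝ) (i : Fin m) : ℕ :=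
  (Finset.univ.filter fun j => q j < q i).card

lemma rnk_lt (i : Fin m) : rnk q i ≤ m - 1 := by
  have hsub : (Finset.univ.filter fun j => q j < q i) ⊆ Finset.univ.erase i := by
    intro j hj
    simp only [Finset.mem_filter] at hj
    exact Finset.mem_erase.2 ⟨fun h => absurd (h ▸ hj.2) (lt_irrefl _), Finset.mem_univ j⟩
  have := Finset.card_le_card hsub
  rwa [Finset.card_erase_of_mem (Finset.mem_univ i), Finset.card_univ, Fintype.card_fin] at this

lemma rnk_mono {i j : Fin m} (h : q i < q j) : rnk q i < rnk q j := by
  apply Finset.card_lt_card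
  constructor
  · intro k hk
    simp only [Finset.mem_filter] at hk ⊢
    exact ⟨hk.1, hk.2.trans h⟩
  · intro hsub
    have : i ∈ Finset.univ.filter fun k => q k < q j := by
      simp only [Finset.mem_filter]; exact ⟨Finset.mem_univ i, h⟩
    have := hsub this
    simp only [Finset.mem_filter] at this
    exact absurd this.2 (lt_irrefl _)

noncomputable def regWit (m : ℕ) (p : Fin m → ℤ) (s : Fin m → Bool) (q : Fin m → ℝ) :
    Fin m → ℝ :=
  fun i => (p i : ℝ) + sval (s i) * ((1 + rnk q i : ℝ) / (2 * (m + 1)))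

lemma regWit_mem (hm : 1 ≤ m) : regWit m p s q ∈ Reg m p s q := by
  have hden : (0:ℝ) < 2 * (m + 1) := by positivity
  have hzval : ∀ i, sval (s i) * (regWit m p s q i - (p i : ℝ)) =
      (1 + rnk q i : ℝ) / (2 * (m + 1)) := by
    intro i
    unfold regWit
    rw [add_sub_cancel_left, sval_cancel]
  constructor
  · intro i
    rw [hzval i]
    constructor
    · positivity
    · rw [div_lt_iff₀ hden]
      have h1 : (rnk q i : ℝ) ≤ (m : ℝ) - 1 := by
        have := rnk_lt (q := q) i
        have : (rnk q i : ℝ) ≤ ((m - 1 : ℕ) : ℝ) := by exact_mod_cast this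
        rwa [Nat.cast_sub hm, Nat.cast_one] at this
      nlinarith
  · intro i j hij
    rw [hzval i, hzval j]
    rw [div_lt_div_iff_of_pos_right hden]
    have := rnk_mono hij
    exact_mod_cast Nat.add_lt_add_left this 1

end Cls

section Cls2
variable {m : ℕ} {p : Fin m → ℤ} {s : Fin m → Bool} {q : Fin m → ℝ}

lemma reg_subset_cube : Reg m p s q ⊆ cube m (fun i => (p i : ℝ)) := by
  intro x hx i
  obtain ⟨h1, h2⟩ := hx.1 i
  have habs : |x i - (p i : ℝ)| = sval (s i) * (x i - (p i : ℝ)) := by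
    rw [← sval_abs (s i)]
    exact abs_of_pos h1 |>.symm ▸ (abs_of_pos h1)
  simp only
  rw [habs]
  linarith

/-- Every alcove contained in the cube around an integer point `p` is a region. -/
lemma alcove_classify (hm : 1 ≤ m) {A : Set (Fin m → ℝ)} (hA : IsAlcove m A)
    (hcube : A ⊆ cube m (fun i => (p i : ℝ))) :
    ∃ (s : Fin m → Bool) (q : Fin m → ℝ), Function.Injective q ∧
      (∀ i, 0 < q i ∧ q i < 1/2) ∧ A = Reg m p s q := by
  obtain ⟨x, hxarr, rfl⟩ := hA
  have hxA : x ∈ connectedComponentIn (ArrComp m) x := mem_connectedComponentIn hxarr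
  have hxc : x ∈ cube m (fun i => (p i : ℝ)) := hcube hxA
  set s : Fin m → Bool := fun i => decide ((p i : ℝ) < x i) with hs
  set q : Fin m → ℝ := fun i => |x i - (p i : ℝ)| with hqd
  have hzq : ∀ i, sval (s i) * (x i - (p i : ℝ)) = q i := by
    intro i
    simp only [hs, hqd, sval]
    by_cases h : (p i : ℝ) < x i
    · simp [h, abs_of_pos (by linarith : (0:ℝ) < x i - (p i : ℝ))]
    · have hne : x i ≠ (p i : ℝ) := by
        intro heq
        exact arr_two_ne hxarr i (2 * p i) (by rw [heq]; push_cast; ring)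
      have hlt : x i < (p i : ℝ) := lt_of_le_of_ne (not_lt.1 h) hne
      simp [h, abs_of_neg (by linarith : x i - (p i : ℝ) < 0)]
  have hq0 : ∀ i, 0 < q i ∧ q i < 1/2 := by
    intro i
    constructor
    · rcases (abs_nonneg (x i - (p i : ℝ))).lt_or_eq with h | h
      · exact h
      · exfalso
        have : x i = (p i : ℝ) := by
          have := abs_eq_zero.1 h.symm
          linarith
        exact arr_two_ne hxarr i (2 * p i) (by rw [this]; push_cast; ring)
    · rcases lt_or_eq_of_le (hxc i) with h | h
      · exact h
      · exfalso
        rcases abs_eq (by norm_num : (0:ℝ) ≤ 1/2) |>.1 h with h' | h'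
        · exact arr_two_ne hxarr i (2 * p i + 1)
            (by push_cast; linarith)
        · exact arr_two_ne hxarr i (2 * p i - 1)
            (by push_cast; linarith)
  have hqinj : Function.Injective q := by
    intro i j hij
    by_contra hne
    have h1 : x i - (p i : ℝ) = sval (s i) * q i := by rw [← hzq i, sval_cancel]
    have h2 : x j - (p j : ℝ) = sval (s j) * q j := by rw [← hzq j, sval_cancel]
    rw [hij] at h1
    by_cases hss : s i = s j
    · apply arr_diff_ne hxarr hne (p i - p j)
      rw [hss] at h1
      push_cast
      linarith
    · apply arr_sum_ne hxarr hne (p i + p j)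
      have : sval (s i) = - sval (s j) := by
        cases hsi : s i <;> cases hsj : s j
        · exact absurd (hsi.trans hsj.symm) hss
        · simp [sval]
        · simp [sval]
        · exact absurd (hsi.trans hsj.symm) hss
      rw [this] at h1
      push_cast
      linarith
  have hxreg : x ∈ Reg m p s q := by
    constructor
    · intro i
      rw [hzq i]
      exact hq0 i
    · intro i j hij
      rw [hzq i, hzq j]
      exact hij
  exact ⟨s, q, hqinj, hq0, (reg_component hqinj hxreg).symm ▸ rfl⟩

lemma reg_isAlcove (hm : 1 ≤ m) (hq : Function.Injective q) : IsAlcove m (Reg m p s q) := by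
  have hw := regWit_mem (p := p) (s := s) (q := q) hm
  exact ⟨regWit m p s q, reg_subset_arrComp hq hw, (reg_component hq hw).symm⟩

/-- An explicit point of the fundamental alcove. -/
noncomputable def fundWit (m : ℕ) : Fin m → ℝ := fun i => ((m : ℝ) - i) / (2 * m + 1)

lemma fundWit_mem (hm : 1 ≤ m) : fundWit m ∈ FundAlcove m := by
  have hden : (0:ℝ) < 2 * m + 1 := by positivity
  have hco : ∀ i : Fin m, 0 < (m : ℝ) - i ∧ (m : ℝ) - i ≤ m := by
    intro i
    have : (i : ℝ) < m := by exact_mod_cast i.isLt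
    constructor <;> [linarith; linarith [Nat.cast_nonneg (α := ℝ) i.val]]
  intro α hα
  rcases hα with ⟨i, rfl⟩ | ⟨i, j, hij, rfl | rfl⟩
  · rw [dotp_smul2]
    obtain ⟨h1, h2⟩ := hco i
    unfold fundWit
    constructor
    · positivity
    · rw [← mul_div_assoc, div_lt_one hden]; linarith
  · rw [dotp_addBasis m _ i j hij.ne]
    obtain ⟨h1, h2⟩ := hco i
    obtain ⟨h3, h4⟩ := hco j
    have hijr : (i : ℝ) + 1 ≤ j := by exact_mod_cast hij
    unfold fundWit
    rw [← add_div]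
    constructor
    · positivity
    · rw [div_lt_one hden]; linarith
  · rw [dotp_subBasis m _ i j hij.ne]
    have hijr : (i : ℝ) + 1 ≤ j := by exact_mod_cast hij
    have : (j : ℝ) < m := by exact_mod_cast j.isLt
    unfold fundWit
    rw [div_sub_div_same]
    constructor
    · apply div_pos (by linarith) hden
    · rw [div_lt_one hden]; linarith [Nat.cast_nonneg (α := ℝ) i.val]

end Cls2

section Enum
variable {m : ℕ}

/-- Index type for the positive roots. -/
abbrev RIdx (m : ℕ) := Fin m ⊕ Fin m × Fin m × Bool

noncomputable def rootv : RIdx m → (Fin m → ℝ)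
  | .inl i => (2 : ℝ) • stdBasis m i
  | .inr (i, j, b) => if b then stdBasis m i + stdBasis m j else stdBasis m i - stdBasis m j

def okIdx : RIdx m → Prop
  | .inl _ => True
  | .inr (i, j, _) => i < j

lemma rootv_mem_posRoot {ι : RIdx m} (h : okIdx ι) : rootv ι ∈ PosRoot m := by
  match ι with
  | .inl i => exact Or.inl ⟨i, rfl⟩
  | .inr (i, j, b) =>
    cases b
    · exact Or.inr ⟨i, j, h, Or.inr rfl⟩
    · exact Or.inr ⟨i, j, h, Or.inl rfl⟩

lemma posRoot_iff {α : Fin m → ℝ} : α ∈ PosRoot m ↔ ∃ ι : RIdx m, okIdx ι ∧ α = rootv ι := by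
  constructor
  · rintro (⟨i, rfl⟩ | ⟨i, j, hij, rfl | rfl⟩)
    · exact ⟨.inl i, trivial, rfl⟩
    · exact ⟨.inr (i, j, true), hij, rfl⟩
    · exact ⟨.inr (i, j, false), hij, rfl⟩
  · rintro ⟨ι, hok, rfl⟩
    exact rootv_mem_posRoot hok

lemma rootv_apply_inr (i j : Fin m) (b : Bool) (t : Fin m) :
    rootv (.inr (i, j, b)) t =
      (if t = i then (1:ℝ) else 0) + (if b then 1 else -1) * (if t = j then (1:ℝ) else 0) := by
  cases b
  · simp only [rootv, Bool.false_eq_true, if_false, Pi.sub_apply, stdBasis]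
    split_ifs <;> ring
  · simp only [rootv, if_true, Pi.add_apply, stdBasis]
    split_ifs <;> ring

lemma two_smul_ne_inr (i i' j' : Fin m) (b' : Bool) (hij' : i' ≠ j') :
    rootv (.inl i) ≠ rootv (.inr (i', j', b')) := by
  intro heq
  have hthis := congrFun heq i'
  rw [rootv_apply_inr] at hthis
  simp only [rootv, Pi.smul_apply, stdBasis, smul_eq_mul, if_pos rfl, if_neg hij',
    mul_zero, add_zero] at hthis
  by_cases hii : i' = i
  · rw [if_pos hii] at hthis; norm_num at hthis
  · rw [if_neg hii] at hthis; norm_num at hthis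

lemma rootv_inj {ι ι' : RIdx m} (h : okIdx ι) (h' : okIdx ι') (heq : rootv ι = rootv ι') :
    ι = ι' := by
  match ι, ι' with
  | .inl i, .inl i' =>
    have hthis := congrFun heq i
    simp only [rootv, Pi.smul_apply, stdBasis, smul_eq_mul, if_pos rfl, mul_one] at hthis
    by_cases hii : i = i'
    · rw [hii]
    · rw [if_neg hii] at hthis
      norm_num at hthis
  | .inl i, .inr (i', j', b') =>
    exact absurd heq (two_smul_ne_inr i i' j' b' (ne_of_lt h'))
  | .inr (i', j', b'), .inl i =>
    exact absurd heq.symm (two_smul_ne_inr i i' j' b' (ne_of_lt h))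
  | .inr (i, j, b), .inr (i', j', b') =>
    have hij : i ≠ j := ne_of_lt h
    have hij' : i' ≠ j' := ne_of_lt h'
    by_cases hii : i = i'
    · subst hii
      have hj := congrFun heq j
      rw [rootv_apply_inr, rootv_apply_inr] at hj
      simp only [if_neg (Ne.symm hij), if_pos rfl, mul_one, zero_add] at hj
      by_cases hjj : j = j'
      · subst hjj
        simp only [if_pos rfl, mul_one] at hj
        cases b <;> cases b' <;> norm_num at hj <;> rfl
      · exfalso
        rw [if_neg hjj, mul_zero] at hj
        cases b <;> norm_num at hj
    · exfalso
      have hi := congrFun heq i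
      have hi' := congrFun heq i'
      rw [rootv_apply_inr, rootv_apply_inr] at hi hi'
      simp only [if_pos rfl, if_neg hij, if_neg hii, if_neg (Ne.symm hii), if_neg hij',
        mul_zero, mul_one, add_zero, zero_add] at hi hi'
      -- hi : 1 = eps b' * (if i = j' then 1 else 0)
      -- hi' : eps b * (if i' = j then 1 else 0) = 1
      by_cases h1 : i = j'
      · by_cases h2 : i' = j
        · subst h1
          subst h2
          exact absurd h' (not_lt.2 h.le)
        · rw [if_neg h2, mul_zero] at hi'
          norm_num at hi'
      · rw [if_neg h1, mul_zero] at hi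
        norm_num at hi
end Enum

section Count
variable {m : ℕ} {p : Fin m → ℤ} {s : Fin m → Bool} {q : Fin m → ℝ}

/-- The set of levels `a < m' < a+1`-separating from `(0,1)`. -/
noncomputable def Mset (a : ℤ) : Finset ℤ := Finset.Ico (min 1 (a+1)) (max 1 (a+1))

lemma Mset_card (a : ℤ) : (Mset a).card = a.natAbs := by
  rw [Mset, Int.card_Ico]
  omega

lemma mem_Mset (a b : ℤ) : b ∈ Mset a ↔ (1 ≤ b ∧ b ≤ a) ∨ (a + 1 ≤ b ∧ b ≤ 0) := by
  rw [Mset, Finset.mem_Ico]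
  omega

lemma fund_prop {x : Fin m → ℝ} (hx : x ∈ FundAlcove m) :
    ∀ α ∈ PosRoot m, 0 < dotp m x α ∧ dotp m x α < 1 := hx

lemma separates_iff {F S : Set (Fin m → ℝ)} {α : Fin m → ℝ} {a : ℤ}
    (hF : ∀ x ∈ F, 0 < dotp m x α ∧ dotp m x α < 1)
    (hS : ∀ x ∈ S, (a : ℝ) < dotp m x α ∧ dotp m x α < a + 1)
    (hFne : F.Nonempty) (hSne : S.Nonempty) (b : ℤ) :
    Separates m α b F S ↔ b ∈ Mset a := by
  rw [mem_Mset]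
  constructor
  · rintro (⟨h1, h2⟩ | ⟨h1, h2⟩)
    · obtain ⟨f, hf⟩ := hFne
      obtain ⟨y, hy⟩ := hSne
      have hb1 : (0 : ℝ) < b := lt_trans (hF f hf).1 (h1 f hf)
      have hb2 : (b : ℝ) < a + 1 := lt_trans (h2 y hy) (hS y hy).2
      left
      constructor
      · have : (0:ℤ) < b := by exact_mod_cast hb1
        omega
      · have : (b : ℝ) < (a : ℝ) + 1 := hb2
        have : b < a + 1 := by exact_mod_cast this
        omega
    · obtain ⟨f, hf⟩ := hFne
      obtain ⟨y, hy⟩ := hSne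
      have hb1 : (b : ℝ) < 1 := lt_trans (h2 f hf) (hF f hf).2
      have hb2 : (a : ℝ) < b := lt_trans (hS y hy).1 (h1 y hy)
      right
      constructor
      · have : a < b := by exact_mod_cast hb2
        omega
      · have : b < 1 := by exact_mod_cast hb1
        omega
  · rintro (⟨h1, h2⟩ | ⟨h1, h2⟩)
    · left
      constructor
      · intro x hx
        have := (hF x hx).2
        have h1' : (1 : ℝ) ≤ b := by exact_mod_cast h1
        linarith
      · intro x hx
        have := (hS x hx).1
        have h2' : (b : ℝ) ≤ a := by exact_mod_cast h2
        linarith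
    · right
      constructor
      · intro x hx
        have := (hS x hx).2
        have h1' : (a : ℝ) + 1 ≤ b := by exact_mod_cast h1
        linarith
      · intro x hx
        have := (hF x hx).1
        have h2' : (b : ℝ) ≤ 0 := by exact_mod_cast h2
        linarith

/-- Floor value of each root functional on the region. -/
noncomputable def Tval (p : Fin m → ℤ) (s : Fin m → Bool) (q : Fin m → ℝ) : RIdx m → ℤ
  | .inl i => T2 p s i
  | .inr (i, j, b) => if b then Tsum p s q i j else Tdiff p s q i j

lemma Tval_lt (hq : Function.Injective q) {x : Fin m → ℝ} (hx : x ∈ Reg m p s q)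
    {ι : RIdx m} (hok : okIdx ι) :
    (Tval p s q ι : ℝ) < dotp m x (rootv ι) ∧ dotp m x (rootv ι) < Tval p s q ι + 1 := by
  match ι with
  | .inl i =>
    rw [show rootv (.inl i) = (2:ℝ) • stdBasis m i from rfl, dotp_smul2]
    exact T2_lt hx i
  | .inr (i, j, b) =>
    have hij : i ≠ j := ne_of_lt hok
    cases b
    · rw [show rootv (.inr (i,j,false)) = stdBasis m i - stdBasis m j from rfl,
        dotp_subBasis m x i j hij]
      exact Tdiff_lt hq hx i j hij
    · rw [show rootv (.inr (i,j,true)) = stdBasis m i + stdBasis m j from rfl,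
        dotp_addBasis m x i j hij]
      exact Tsum_lt hq hx i j hij

/-- The separating-hyperplane count of a region from the fundamental alcove. -/
lemma sepCount_reg (hm : 1 ≤ m) (hq : Function.Injective q) :
    sepCount m (FundAlcove m) (Reg m p s q) =
      ∑ i : Fin m, (T2 p s i).natAbs +
      ∑ ij ∈ Finset.univ.filter (fun ij : Fin m × Fin m => ij.1 < ij.2),
        ((Tsum p s q ij.1 ij.2).natAbs + (Tdiff p s q ij.1 ij.2).natAbs) := by
  classical
  have hFne : (FundAlcove m).Nonempty := ⟨fundWit m, fundWit_mem hm⟩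
  have hSne : (Reg m p s q).Nonempty := ⟨regWit m p s q, regWit_mem hm⟩
  set idxF : Finset (RIdx m) := Finset.univ.filter (fun ι => okIdx ι) with hidxF
  set bigF : Finset ((Fin m → ℝ) × ℤ) :=
    idxF.biUnion (fun ι => (Mset (Tval p s q ι)).image (fun a => (rootv ι, a))) with hbigF
  have hmemidx : ∀ ι : RIdx m, ι ∈ idxF ↔ okIdx ι := by
    intro ι; simp [hidxF]
  have hseteq : {qq : (Fin m → ℝ) × ℤ | qq.1 ∈ PosRoot m ∧
      Separates m qq.1 qq.2 (FundAlcove m) (Reg m p s q)} = ↑bigF := by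
    ext ⟨α, a⟩
    simp only [Set.mem_setOf_eq, hbigF, Finset.coe_biUnion, Finset.mem_coe, Set.mem_iUnion,
      Finset.mem_image, Prod.mk.injEq]
    constructor
    · rintro ⟨hα, hsep⟩
      obtain ⟨ι, hok, rfl⟩ := posRoot_iff.1 hα
      refine ⟨ι, (hmemidx ι).2 hok, a, ?_, rfl, rfl⟩
      exact (separates_iff (fun x hx => fund_prop hx _ (rootv_mem_posRoot hok))
        (fun x hx => Tval_lt hq hx hok) hFne hSne a).1 hsep
    · rintro ⟨ι, hι, b, hb, rfl, rfl⟩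
      have hok := (hmemidx ι).1 hι
      refine ⟨rootv_mem_posRoot hok, ?_⟩
      exact (separates_iff (fun x hx => fund_prop hx _ (rootv_mem_posRoot hok))
        (fun x hx => Tval_lt hq hx hok) hFne hSne b).2 hb
  rw [sepCount, hseteq, Nat.card_coe_set_eq, Set.ncard_coe_finset]
  rw [Finset.card_biUnion]
  · have hcard : ∀ ι ∈ idxF, ((Mset (Tval p s q ι)).image (fun a => (rootv ι, a))).card
        = (Tval p s q ι).natAbs := by
      intro ι _
      rw [Finset.card_image_of_injective _ (fun a b hab => (Prod.ext_iff.1 hab).2),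
        Mset_card]
    rw [Finset.sum_congr rfl hcard]
    rw [hidxF, Finset.sum_filter]
    rw [Fintype.sum_sum_type]
    congr 1
    · apply Finset.sum_congr rfl
      intro i _
      simp [okIdx, Tval]
    · rw [Finset.sum_filter]
      rw [Fintype.sum_prod_type]
      rw [Fintype.sum_prod_type]
      apply Finset.sum_congr rfl
      intro i _
      rw [Fintype.sum_prod_type]
      apply Finset.sum_congr rfl
      intro j _
      rw [Fintype.sum_bool]
      by_cases h : i < j <;> simp [okIdx, Tval, h]
  · intro ι hι κ hκ hne
    apply Finset.disjoint_left.2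
    rintro ⟨α, a⟩ h1 h2
    simp only [Finset.mem_image] at h1 h2
    obtain ⟨b1, _, hb1⟩ := h1
    obtain ⟨b2, _, hb2⟩ := h2
    apply hne
    exact rootv_inj ((hmemidx ι).1 hι) ((hmemidx κ).1 hκ)
      ((Prod.ext_iff.1 hb1).1.trans (Prod.ext_iff.1 hb2).1.symm)
end Count

section Emb
variable {n ℓ : ℕ}

/-- The order embedding `Fin (n-1) → Fin n` skipping index `ℓ-1`. -/
def emb (n ℓ : ℕ) (t : Fin (n-1)) : Fin n :=
  ⟨if t.val < ℓ - 1 then t.val else t.val + 1, by have := t.isLt; split <;> omega⟩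

lemma emb_val (t : Fin (n-1)) : (emb n ℓ t).val = if t.val < ℓ - 1 then t.val else t.val + 1 :=
  rfl

lemma emb_ne (t : Fin (n-1)) : (emb n ℓ t).val ≠ ℓ - 1 := by
  rw [emb_val]; split <;> omega

lemma emb_lt_iff (t u : Fin (n-1)) : emb n ℓ t < emb n ℓ u ↔ t < u := by
  constructor <;> intro h <;>
    [skip; skip] <;>
    · have h' := h
      rw [Fin.lt_def] at h' ⊢
      rw [emb_val, emb_val] at *
      split_ifs at * <;> omega

lemma emb_inj : Function.Injective (emb n ℓ) := by
  intro t u h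
  have : (emb n ℓ t).val = (emb n ℓ u).val := congrArg Fin.val h
  rw [emb_val, emb_val] at this
  apply Fin.ext
  split_ifs at this <;> omega

lemma emb_surj (h2 : ℓ ≤ n) (i : Fin n) (hi : i.val ≠ ℓ - 1) :
    ∃ t : Fin (n-1), emb n ℓ t = i := by
  refine ⟨⟨if i.val < ℓ - 1 then i.val else i.val - 1, by have := i.isLt; split <;> omega⟩, ?_⟩
  apply Fin.ext
  rw [emb_val]
  simp only
  split_ifs <;> omega

lemma delCoordR_eq (x : Fin n → ℝ) (t : Fin (n-1)) :
    delCoordR n ℓ x t = x (emb n ℓ t) := by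
  unfold delCoordR rget
  have hlt : (if t.val < ℓ - 1 then t.val else t.val + 1) < n := by
    have := t.isLt; split <;> omega
  rw [dif_pos hlt]
  rfl

lemma delCoord_piMap (c : ℝ) (x : Fin n → ℝ) (t : Fin (n-1)) :
    delCoordR n ℓ (piMap n ℓ c x) t = x (emb n ℓ t) := by
  rw [delCoordR_eq]
  unfold piMap
  rw [if_neg (emb_ne t)]

end Emb

section Proj
variable {n ℓ : ℕ}

lemma reg_image (h1 : 1 ≤ ℓ) (h2 : ℓ ≤ n) (hn : 2 ≤ n) (c : ℝ)
    (p : Fin n → ℤ) (s : Fin n → Bool) (q : Fin n → ℝ)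
    (hppos : ∀ i : Fin n, i.val = ℓ - 1 → (p i : ℝ) = c) :
    (fun x => delCoordR n ℓ (piMap n ℓ c x)) '' (Reg n p s q) =
      Reg (n-1) (fun t => p (emb n ℓ t)) (fun t => s (emb n ℓ t)) (fun t => q (emb n ℓ t)) := by
  have hpos : ℓ - 1 < n := by omega
  set pos : Fin n := ⟨ℓ - 1, hpos⟩ with hposdef
  apply Set.Subset.antisymm
  · rintro _ ⟨x, hx, rfl⟩
    have hco : (fun x => delCoordR n ℓ (piMap n ℓ c x)) x = fun t => x (emb n ℓ t) :=
      funext (delCoord_piMap c x)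
    rw [hco]
    exact ⟨fun t => hx.1 _, fun t u htu => hx.2 _ _ htu⟩
  · intro y hy
    -- choose the value of the deleted coordinate
    set z' : Fin (n-1) → ℝ := fun t => sval (s (emb n ℓ t)) * (y t - (p (emb n ℓ t) : ℝ))
      with hz'
    set aF : Finset ℝ :=
      insert (0:ℝ) ((Finset.univ.filter (fun t => q (emb n ℓ t) < q pos)).image z') with haF
    set bF : Finset ℝ :=
      insert ((1:ℝ)/2) ((Finset.univ.filter (fun t => q pos < q (emb n ℓ t))).image z') with hbF
    have haFne : aF.Nonempty := Finset.insert_nonempty _ _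
    have hbFne : bF.Nonempty := Finset.insert_nonempty _ _
    have hz'pos : ∀ t, 0 < z' t ∧ z' t < 1/2 := fun t => hy.1 t
    have hab : ∀ u ∈ aF, ∀ v ∈ bF, u < v := by
      intro u hu v hv
      rw [haF, Finset.mem_insert] at hu
      rw [hbF, Finset.mem_insert] at hv
      rcases hu with rfl | hu <;> rcases hv with rfl | hv
      · norm_num
      · obtain ⟨t, _, rfl⟩ := Finset.mem_image.1 hv
        exact (hz'pos t).1
      · obtain ⟨t, _, rfl⟩ := Finset.mem_image.1 hu
        exact (hz'pos t).2
      · obtain ⟨t, ht, rfl⟩ := Finset.mem_image.1 hu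
        obtain ⟨w, hw, rfl⟩ := Finset.mem_image.1 hv
        rw [Finset.mem_filter] at ht hw
        exact hy.2 t w (lt_trans ht.2 hw.2)
    set a : ℝ := aF.max' haFne with hadef
    set b : ℝ := bF.min' hbFne with hbdef
    have haltb : a < b := hab a (aF.max'_mem haFne) b (bF.min'_mem hbFne)
    have ha0 : 0 ≤ a := aF.le_max' 0 (Finset.mem_insert_self _ _)
    have hb12 : b ≤ 1/2 := bF.min'_le _ (Finset.mem_insert_self _ _)
    set z0 : ℝ := (a + b) / 2 with hz0
    have hz0a : a < z0 := by rw [hz0]; linarith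
    have hz0b : z0 < b := by rw [hz0]; linarith
    set x : Fin n → ℝ := fun i =>
      if hi : i.val = ℓ - 1 then (p pos : ℝ) + sval (s pos) * z0
      else y ⟨if i.val < ℓ - 1 then i.val else i.val - 1, by
        have := i.isLt; split <;> omega⟩ with hxdef
    have hxemb : ∀ t : Fin (n-1), x (emb n ℓ t) = y t := by
      intro t
      simp only [hxdef]
      rw [dif_neg (emb_ne t)]
      congr 1
      apply Fin.ext
      simp only [emb_val]
      have := t.isLt
      split_ifs <;> omega
    have hxpos : x pos = (p pos : ℝ) + sval (s pos) * z0 := by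
      simp only [hxdef]
      split
      · rfl
      · next h => exact absurd rfl h
    have hzx : ∀ i : Fin n, sval (s i) * (x i - (p i : ℝ)) =
        if i = pos then z0 else sval (s i) * (x i - (p i : ℝ)) := by
      intro i; split <;> [skip; rfl]
      next hi =>
        subst hi
        rw [hxpos, add_sub_cancel_left, sval_cancel]
    have hiz : ∀ i : Fin n, i ≠ pos → ∃ t : Fin (n-1), emb n ℓ t = i := by
      intro i hi
      apply emb_surj h2
      intro hval
      exact hi (Fin.ext hval)
    have hxmem : x ∈ Reg n p s q := by
      constructor
      · intro i
        by_cases hi : i = pos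
        · rw [hi, hxpos, add_sub_cancel_left, sval_cancel]
          constructor <;> linarith
        · obtain ⟨t, rfl⟩ := hiz i hi
          rw [hxemb t]
          exact hz'pos t
      · intro i j hij
        by_cases hi : i = pos <;> by_cases hj : j = pos
        · rw [hi, hj] at hij; exact absurd hij (lt_irrefl _)
        · subst hi
          obtain ⟨t, rfl⟩ := hiz j hj
          rw [hxemb t, hxpos, add_sub_cancel_left, sval_cancel]
          have hmem : z' t ∈ bF := by
            rw [hbF]
            apply Finset.mem_insert_of_mem
            exact Finset.mem_image_of_mem z' (Finset.mem_filter.2 ⟨Finset.mem_univ t, hij⟩)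
          calc z0 < b := hz0b
            _ ≤ z' t := bF.min'_le _ hmem
        · subst hj
          obtain ⟨t, rfl⟩ := hiz i hi
          rw [hxemb t, hxpos, add_sub_cancel_left, sval_cancel]
          have hmem : z' t ∈ aF := by
            rw [haF]
            apply Finset.mem_insert_of_mem
            exact Finset.mem_image_of_mem z' (Finset.mem_filter.2 ⟨Finset.mem_univ t, hij⟩)
          calc sval (s (emb n ℓ t)) * (y t - (p (emb n ℓ t) : ℝ)) = z' t := rfl
            _ ≤ a := aF.le_max' _ hmem
            _ < z0 := hz0a
        · obtain ⟨t, rfl⟩ := hiz i hi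
          obtain ⟨u, rfl⟩ := hiz j hj
          rw [hxemb t, hxemb u]
          exact hy.2 t u hij
    refine ⟨x, hxmem, ?_⟩
    funext t
    show delCoordR n ℓ (piMap n ℓ c x) t = y t
    rw [delCoord_piMap c x t, hxemb t]

end Proj

section Decomp
variable {n ℓ : ℕ}

lemma sum_split_pos (h2 : ℓ ≤ n) (hpos : ℓ - 1 < n) (f : Fin n → ℕ) :
    ∑ i : Fin n, f i = f ⟨ℓ - 1, hpos⟩ + ∑ t : Fin (n-1), f (emb n ℓ t) := by
  set pos : Fin n := ⟨ℓ - 1, hpos⟩ with hposd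
  have hne : ∀ t : Fin (n-1), emb n ℓ t ≠ pos := by
    intro t h
    exact emb_ne t (congrArg Fin.val h)
  have hkey : ∑ t : Fin (n-1), f (emb n ℓ t) = ∑ i ∈ Finset.univ.erase pos, f i := by
    apply Finset.sum_bij (fun t _ => emb n ℓ t)
    · intro t _
      exact Finset.mem_erase.2 ⟨hne t, Finset.mem_univ _⟩
    · intro t _ u _ h
      exact emb_inj h
    · intro i hi
      have : i.val ≠ ℓ - 1 := fun h => (Finset.mem_erase.1 hi).1 (Fin.ext h)
      obtain ⟨t, ht⟩ := emb_surj h2 i this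
      exact ⟨t, Finset.mem_univ t, ht⟩
    · intro t _
      rfl
  rw [hkey, ← Finset.add_sum_erase _ f (Finset.mem_univ pos)]

lemma sum_split_pairs (h2 : ℓ ≤ n) (hpos : ℓ - 1 < n) (g : Fin n → Fin n → ℕ) :
    ∑ ij ∈ Finset.univ.filter (fun ij : Fin n × Fin n => ij.1 < ij.2), g ij.1 ij.2 =
      (∑ ab ∈ Finset.univ.filter (fun ab : Fin (n-1) × Fin (n-1) => ab.1 < ab.2),
        g (emb n ℓ ab.1) (emb n ℓ ab.2)) +
      ∑ t : Fin (n-1), (if emb n ℓ t < (⟨ℓ - 1, hpos⟩ : Fin n)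
        then g (emb n ℓ t) (⟨ℓ - 1, hpos⟩ : Fin n) else g (⟨ℓ - 1, hpos⟩ : Fin n) (emb n ℓ t)) := by
  classical
  set pos : Fin n := ⟨ℓ - 1, hpos⟩ with hposd
  have hne : ∀ t : Fin (n-1), emb n ℓ t ≠ pos := fun t h => emb_ne t (congrArg Fin.val h)
  have hvalne : ∀ i : Fin n, i ≠ pos → i.val ≠ ℓ - 1 := fun i hi h => hi (Fin.ext h)
  rw [← Finset.sum_filter_add_sum_filter_not
    (Finset.univ.filter (fun ij : Fin n × Fin n => ij.1 < ij.2))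
    (fun ij => ij.1 ≠ pos ∧ ij.2 ≠ pos) (fun ij => g ij.1 ij.2)]
  congr 1
  · symm
    apply Finset.sum_bij (fun (ab : Fin (n-1) × Fin (n-1)) _ => (emb n ℓ ab.1, emb n ℓ ab.2))
    · rintro ⟨a, b⟩ hab
      rw [Finset.mem_filter] at hab ⊢
      refine ⟨Finset.mem_filter.2 ⟨Finset.mem_univ _, ?_⟩, hne a, hne b⟩
      exact (emb_lt_iff a b).2 hab.2
    · rintro ⟨a, b⟩ _ ⟨a', b'⟩ _ h
      rw [Prod.ext_iff] at h ⊢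
      exact ⟨emb_inj h.1, emb_inj h.2⟩
    · rintro ⟨i, j⟩ hij
      rw [Finset.mem_filter, Finset.mem_filter] at hij
      obtain ⟨⟨_, hlt⟩, hi, hj⟩ := hij
      obtain ⟨a, ha⟩ := emb_surj h2 i (hvalne i hi)
      obtain ⟨b, hb⟩ := emb_surj h2 j (hvalne j hj)
      refine ⟨(a, b), Finset.mem_filter.2 ⟨Finset.mem_univ _, ?_⟩, by simp [ha, hb]⟩
      rw [← emb_lt_iff (ℓ := ℓ), ha, hb]
      exact hlt
    · intro ab _
      rfl
  · symm
    apply Finset.sum_bij (fun (t : Fin (n-1)) _ =>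
      if emb n ℓ t < pos then (emb n ℓ t, pos) else (pos, emb n ℓ t))
    · intro t _
      rw [Finset.mem_filter, Finset.mem_filter]
      split
      · next h => exact ⟨⟨Finset.mem_univ _, h⟩, fun hcon => hcon.2 rfl⟩
      · next h =>
        have : pos < emb n ℓ t := (lt_or_gt_of_ne (Ne.symm (hne t))).resolve_right h
        exact ⟨⟨Finset.mem_univ _, this⟩, fun hcon => hcon.1 rfl⟩
    · intro t _ u _ h
      split at h <;> split at h <;> rw [Prod.ext_iff] at h <;>
        first
          | exact emb_inj h.1
          | exact emb_inj h.2
          | exact absurd (show emb n ℓ t = pos by exact h.1) (hne t)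
          | exact absurd (show emb n ℓ t = pos by exact h.2) (hne t)
          | exact absurd (show emb n ℓ t = pos by exact h.1.symm) (hne t)
          | exact absurd (show emb n ℓ t = pos by exact h.2.symm) (hne t)
    · rintro ⟨i, j⟩ hij
      rw [Finset.mem_filter, Finset.mem_filter] at hij
      obtain ⟨⟨_, hlt⟩, hnp⟩ := hij
      rw [not_and_or, not_ne_iff, not_ne_iff] at hnp
      rcases hnp with rfl | rfl
      · -- i = pos
        have hj : j ≠ pos := fun h => absurd (h ▸ hlt) (lt_irrefl _)
        obtain ⟨t, ht⟩ := emb_surj h2 j (hvalne j hj)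
        refine ⟨t, Finset.mem_univ t, ?_⟩
        rw [ht, if_neg (not_lt.2 (le_of_lt (ht ▸ hlt)))]
      · -- j = pos
        have hi : i ≠ pos := fun h => absurd (h ▸ hlt) (lt_irrefl _)
        obtain ⟨t, ht⟩ := emb_surj h2 i (hvalne i hi)
        refine ⟨t, Finset.mem_univ t, ?_⟩
        rw [ht, if_pos (ht ▸ hlt)]
    · intro t _
      split <;> rfl

end Decomp

section SP
variable {n ℓ : ℕ}

/-- The extra separating hyperplanes coming from the deleted coordinate. -/
noncomputable def extraCt (n ℓ : ℕ) (hpos : ℓ - 1 < n)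
    (p : Fin n → ℤ) (s : Fin n → Bool) (q : Fin n → ℝ) : ℕ :=
  (T2 p s ⟨ℓ - 1, hpos⟩).natAbs +
    ∑ t : Fin (n-1), (if emb n ℓ t < (⟨ℓ - 1, hpos⟩ : Fin n)
      then (Tsum p s q (emb n ℓ t) ⟨ℓ - 1, hpos⟩).natAbs +
           (Tdiff p s q (emb n ℓ t) ⟨ℓ - 1, hpos⟩).natAbs
      else (Tsum p s q ⟨ℓ - 1, hpos⟩ (emb n ℓ t)).natAbs +
           (Tdiff p s q ⟨ℓ - 1, hpos⟩ (emb n ℓ t)).natAbs)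

lemma sepCount_proj (hn : 2 ≤ n) (h2 : ℓ ≤ n) (hpos : ℓ - 1 < n)
    (p : Fin n → ℤ) (s : Fin n → Bool) (q : Fin n → ℝ) (hq : Function.Injective q) :
    sepCount n (FundAlcove n) (Reg n p s q) =
      sepCount (n-1) (FundAlcove (n-1))
        (Reg (n-1) (fun t => p (emb n ℓ t)) (fun t => s (emb n ℓ t)) (fun t => q (emb n ℓ t)))
      + extraCt n ℓ hpos p s q := by
  rw [sepCount_reg (by omega) hq,
      sepCount_reg (by omega) (fun a b hab => emb_inj (hq hab)),
      sum_split_pos h2 hpos (fun i => (T2 p s i).natAbs),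
      sum_split_pairs h2 hpos
        (fun i j => (Tsum p s q i j).natAbs + (Tdiff p s q i j).natAbs)]
  have e1 : ∑ t : Fin (n-1), (T2 (fun u => p (emb n ℓ u)) (fun u => s (emb n ℓ u)) t).natAbs
      = ∑ t : Fin (n-1), (T2 p s (emb n ℓ t)).natAbs :=
    Finset.sum_congr rfl (fun t _ => rfl)
  have e2 : ∑ ab ∈ Finset.univ.filter (fun ab : Fin (n-1) × Fin (n-1) => ab.1 < ab.2),
        ((Tsum (fun u => p (emb n ℓ u)) (fun u => s (emb n ℓ u)) (fun u => q (emb n ℓ u))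
            ab.1 ab.2).natAbs +
         (Tdiff (fun u => p (emb n ℓ u)) (fun u => s (emb n ℓ u)) (fun u => q (emb n ℓ u))
            ab.1 ab.2).natAbs)
      = ∑ ab ∈ Finset.univ.filter (fun ab : Fin (n-1) × Fin (n-1) => ab.1 < ab.2),
          ((Tsum p s q (emb n ℓ ab.1) (emb n ℓ ab.2)).natAbs +
           (Tdiff p s q (emb n ℓ ab.1) (emb n ℓ ab.2)).natAbs) :=
    Finset.sum_congr rfl (fun ab _ => rfl)
  rw [e1, e2]
  unfold extraCt
  beta_reduce
  omega

end SP

section Bnd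
variable {n ℓ : ℕ}

noncomputable def extraMin (n ℓ : ℕ) (hpos : ℓ - 1 < n) (c : ℕ) : ℕ :=
  (2*c - 1) + ∑ t : Fin (n-1), (if emb n ℓ t < (⟨ℓ - 1, hpos⟩ : Fin n) then 2*c - 1 else 2*c - 2)

lemma extraCt_lower (c : ℕ) (hc : 1 ≤ c) (hpos : ℓ - 1 < n)
    (p : Fin n → ℤ) (s : Fin n → Bool) (q : Fin n → ℝ)
    (hppos : p ⟨ℓ - 1, hpos⟩ = (c : ℤ))
    (hbnd : ∀ t : Fin (n-1), -(c:ℤ) < p (emb n ℓ t) ∧ p (emb n ℓ t) ≤ (c:ℤ) ∧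
      ((⟨ℓ - 1, hpos⟩ : Fin n) < emb n ℓ t → p (emb n ℓ t) ≤ (c:ℤ) - 1)) :
    extraMin n ℓ hpos c ≤ extraCt n ℓ hpos p s q := by
  unfold extraMin extraCt
  apply Nat.add_le_add
  · unfold T2
    rw [hppos]
    cases hs : s ⟨ℓ - 1, hpos⟩ <;> simp [hs] <;> omega
  · apply Finset.sum_le_sum
    intro t _
    obtain ⟨hb1, hb2, hb3⟩ := hbnd t
    by_cases hlt : emb n ℓ t < (⟨ℓ - 1, hpos⟩ : Fin n)
    · rw [if_pos hlt, if_pos hlt]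
      unfold Tsum Tdiff
      rw [hppos]
      by_cases hq1 : q (emb n ℓ t) < q ⟨ℓ - 1, hpos⟩ <;>
        cases hs1 : s (⟨ℓ - 1, hpos⟩ : Fin n) <;> cases hs2 : s (emb n ℓ t) <;>
        simp [hq1, hs1, hs2] <;> omega
    · rw [if_neg hlt, if_neg hlt]
      have hgt : (⟨ℓ - 1, hpos⟩ : Fin n) < emb n ℓ t := by
        rcases lt_or_gt_of_ne (fun h : emb n ℓ t = (⟨ℓ - 1, hpos⟩ : Fin n) =>
          emb_ne t (show (emb n ℓ t).val = ℓ - 1 from congrArg Fin.val h)) with h | h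
        · exact absurd h hlt
        · exact h
      have hb3' := hb3 hgt
      unfold Tsum Tdiff
      rw [hppos]
      by_cases hq1 : q (⟨ℓ - 1, hpos⟩ : Fin n) < q (emb n ℓ t) <;>
        cases hs1 : s (⟨ℓ - 1, hpos⟩ : Fin n) <;> cases hs2 : s (emb n ℓ t) <;>
        simp [hq1, hs1, hs2] <;> omega

lemma extraCt_exact (c : ℕ) (hc : 1 ≤ c) (hpos : ℓ - 1 < n)
    (p : Fin n → ℤ) (s : Fin n → Bool) (q : Fin n → ℝ)
    (hppos : p ⟨ℓ - 1, hpos⟩ = (c : ℤ))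
    (hbnd : ∀ t : Fin (n-1), -(c:ℤ) < p (emb n ℓ t) ∧ p (emb n ℓ t) ≤ (c:ℤ) ∧
      ((⟨ℓ - 1, hpos⟩ : Fin n) < emb n ℓ t → p (emb n ℓ t) ≤ (c:ℤ) - 1))
    (hspos : s ⟨ℓ - 1, hpos⟩ = false)
    (hqmax : ∀ t : Fin (n-1), q (emb n ℓ t) < q ⟨ℓ - 1, hpos⟩) :
    extraCt n ℓ hpos p s q = extraMin n ℓ hpos c := by
  unfold extraMin extraCt
  congr 1
  · unfold T2
    rw [hppos, hspos]
    simp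
    omega
  · apply Finset.sum_congr rfl
    intro t _
    obtain ⟨hb1, hb2, hb3⟩ := hbnd t
    by_cases hlt : emb n ℓ t < (⟨ℓ - 1, hpos⟩ : Fin n)
    · rw [if_pos hlt, if_pos hlt]
      unfold Tsum Tdiff
      rw [hppos]
      cases hs2 : s (emb n ℓ t) <;>
        simp [hqmax t, hspos, hs2] <;> omega
    · rw [if_neg hlt, if_neg hlt]
      have hgt : (⟨ℓ - 1, hpos⟩ : Fin n) < emb n ℓ t := by
        rcases lt_or_gt_of_ne (fun h : emb n ℓ t = (⟨ℓ - 1, hpos⟩ : Fin n) =>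
          emb_ne t (show (emb n ℓ t).val = ℓ - 1 from congrArg Fin.val h)) with h | h
        · exact absurd h hlt
        · exact h
      have hb3' := hb3 hgt
      have hq1 : ¬ (q (⟨ℓ - 1, hpos⟩ : Fin n) < q (emb n ℓ t)) := not_lt.2 (hqmax t).le
      unfold Tsum Tdiff
      rw [hppos]
      cases hs2 : s (emb n ℓ t) <;>
        simp [hq1, hspos, hs2] <;> omega

/-- Extension of data on `Fin (n-1)` to `Fin n` by inserting a value at position `ℓ-1`. -/
def extendF {α : Type} (n ℓ : ℕ) (h2 : ℓ ≤ n) (v : α) (f : Fin (n-1) → α) : Fin n → α :=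
  fun i => if hi : i.val = ℓ - 1 then v
    else f ⟨if i.val < ℓ - 1 then i.val else i.val - 1, by have := i.isLt; split <;> omega⟩

lemma extendF_emb {α : Type} (h2 : ℓ ≤ n) (v : α) (f : Fin (n-1) → α) (t : Fin (n-1)) :
    extendF n ℓ h2 v f (emb n ℓ t) = f t := by
  unfold extendF
  rw [dif_neg (emb_ne t)]
  congr 1
  apply Fin.ext
  simp only [emb_val]
  have := t.isLt
  split_ifs <;> omega

lemma extendF_pos {α : Type} (h2 : ℓ ≤ n) (hpos : ℓ - 1 < n) (v : α) (f : Fin (n-1) → α) :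
    extendF n ℓ h2 v f ⟨ℓ - 1, hpos⟩ = v := by
  unfold extendF
  split
  · rfl
  · next h => exact absurd rfl h

end Bnd


/-- Under the projection onto the hyperplane `H = {v : v_ℓ = ⌈k/2n⌉}` identified with
`ℝⁿ⁻¹`, the image of any distinguished alcove of the type `Cₙ` arrangement whose coroot
lattice point lies on `H` and corresponds to a symmetric `2n`-core with first part `k` is a
distinguished alcove of the type `C_{n-1}` arrangement. -/
theorem stmt19 (n k ℓ : ℕ) (hn : 2 ≤ n) (hk : 1 ≤ k) (h1 : 1 ≤ ℓ) (h2 : ℓ ≤ n)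
    (hmodn : ℓ ≡ k [MOD n]) (hmod2n : 1 ≤ k % (2*n) ∧ k % (2*n) ≤ n)
    (c : ℕ) (hc : c = (k + 2*n - 1)/(2*n))
    (p : Fin n → ℤ)
    (hp : ∀ i : Fin n,
      (i.val = ℓ - 1 → p i = (c : ℤ)) ∧
      (i.val < ℓ - 1 → -(c : ℤ) < p i ∧ p i ≤ (c : ℤ)) ∧
      (ℓ ≤ i.val → -(c : ℤ) < p i ∧ p i < (c : ℤ)))
    (A : Set (Fin n → ℝ)) (hA : IsAlcove n A)
    (hcube : A ⊆ cube n (fun i => (p i : ℝ)))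
    (hdist : ∀ B, IsAlcove n B → B ⊆ cube n (fun i => (p i : ℝ)) →
      sepCount n (FundAlcove n) A ≤ sepCount n (FundAlcove n) B) :
    IsAlcove (n-1) ((fun x => delCoordR n ℓ (piMap n ℓ (c : ℝ) x)) '' A) ∧
    ((fun x => delCoordR n ℓ (piMap n ℓ (c : ℝ) x)) '' A)
        ⊆ cube (n-1) (delCoordR n ℓ (fun i => (p i : ℝ))) ∧
    ∀ B, IsAlcove (n-1) B → B ⊆ cube (n-1) (delCoordR n ℓ (fun i => (p i : ℝ))) →
      sepCount (n-1) (FundAlcove (n-1))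
          ((fun x => delCoordR n ℓ (piMap n ℓ (c : ℝ) x)) '' A)
        ≤ sepCount (n-1) (FundAlcove (n-1)) B := by
  have hpos : ℓ - 1 < n := by omega
  have hc1 : 1 ≤ c := by
    rw [hc]
    exact (Nat.le_div_iff_mul_le (by omega)).2 (by omega)
  have hn1 : 1 ≤ n - 1 := by omega
  obtain ⟨sA, qA, hqAinj, hqAbnd, hAeq⟩ := alcove_classify (p := p) (by omega) hA hcube
  have hppos : ∀ i : Fin n, i.val = ℓ - 1 → ((p i : ℤ) : ℝ) = (c : ℝ) := by
    intro i hi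
    have := (hp i).1 hi
    exact_mod_cast congrArg (fun z : ℤ => (z : ℝ)) this
  have himg : (fun x => delCoordR n ℓ (piMap n ℓ (c : ℝ) x)) '' A =
      Reg (n-1) (fun t => p (emb n ℓ t)) (fun t => sA (emb n ℓ t))
        (fun t => qA (emb n ℓ t)) := by
    rw [hAeq]
    exact reg_image h1 h2 hn (c : ℝ) p sA qA hppos
  have hq'inj : Function.Injective (fun t : Fin (n-1) => qA (emb n ℓ t)) :=
    fun a b hab => emb_inj (hqAinj hab)
  have hcen : delCoordR n ℓ (fun i => (p i : ℝ)) = fun t => ((p (emb n ℓ t) : ℤ) : ℝ) := by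
    funext t
    exact delCoordR_eq _ t
  have hcubeEq : cube (n-1) (delCoordR n ℓ (fun i => (p i : ℝ))) =
      cube (n-1) (fun t => ((p (emb n ℓ t) : ℤ) : ℝ)) := by
    rw [hcen]
  have hbnd : ∀ t : Fin (n-1), -(c:ℤ) < p (emb n ℓ t) ∧ p (emb n ℓ t) ≤ (c:ℤ) ∧
      ((⟨ℓ - 1, hpos⟩ : Fin n) < emb n ℓ t → p (emb n ℓ t) ≤ (c:ℤ) - 1) := by
    intro t
    have h := hp (emb n ℓ t)
    have hv := emb_ne (ℓ := ℓ) t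
    by_cases hlt : (emb n ℓ t).val < ℓ - 1
    · obtain ⟨ha, hb⟩ := h.2.1 hlt
      refine ⟨ha, hb, fun hgt => ?_⟩
      rw [Fin.lt_def] at hgt
      simp only at hgt
      omega
    · have hge : ℓ ≤ (emb n ℓ t).val := by omega
      obtain ⟨ha, hb⟩ := h.2.2 hge
      exact ⟨ha, hb.le, fun _ => by omega⟩
  refine ⟨?_, ?_, ?_⟩
  · rw [himg]
    exact reg_isAlcove hn1 hq'inj
  · rw [himg, hcubeEq]
    exact reg_subset_cube
  · intro B hB hBc
    rw [hcubeEq] at hBc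
    obtain ⟨sB, qB, hqBinj, hqBbnd, hBeq⟩ :=
      alcove_classify (p := fun t => p (emb n ℓ t)) hn1 hB hBc
    set sL : Fin n → Bool := extendF n ℓ h2 false sB with hsL
    set qL : Fin n → ℝ := extendF n ℓ h2 (1:ℝ) qB with hqL
    have hqLinj : Function.Injective qL := by
      intro i j hij
      by_cases hi : i.val = ℓ - 1 <;> by_cases hj : j.val = ℓ - 1
      · exact Fin.ext (hi.trans hj.symm)
      · exfalso
        obtain ⟨t, rfl⟩ := emb_surj h2 j hj
        rw [show i = (⟨ℓ - 1, hpos⟩ : Fin n) from Fin.ext hi] at hij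
        rw [hqL, extendF_pos h2 hpos, extendF_emb] at hij
        have := (hqBbnd t).2
        rw [← hij] at this
        norm_num at this
      · exfalso
        obtain ⟨t, rfl⟩ := emb_surj h2 i hi
        rw [show j = (⟨ℓ - 1, hpos⟩ : Fin n) from Fin.ext hj] at hij
        rw [hqL, extendF_pos h2 hpos, extendF_emb] at hij
        have := (hqBbnd t).2
        rw [hij] at this
        norm_num at this
      · obtain ⟨t, rfl⟩ := emb_surj h2 i hi
        obtain ⟨u, rfl⟩ := emb_surj h2 j hj
        rw [hqL, extendF_emb, extendF_emb] at hij
        exact congrArg (emb n ℓ) (hqBinj hij)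
    have hLalc : IsAlcove n (Reg n p sL qL) := reg_isAlcove (by omega) hqLinj
    have hLcube : Reg n p sL qL ⊆ cube n (fun i => (p i : ℝ)) := reg_subset_cube
    have hd := hdist _ hLalc hLcube
    rw [hAeq] at hd
    have hprojA := sepCount_proj hn h2 hpos p sA qA hqAinj
    have hprojL := sepCount_proj hn h2 hpos p sL qL hqLinj
    have hsLemb : (fun t => sL (emb n ℓ t)) = sB := funext (fun t => extendF_emb h2 _ _ t)
    have hqLemb : (fun t => qL (emb n ℓ t)) = qB := funext (fun t => extendF_emb h2 _ _ t)
    rw [hsLemb, hqLemb, ← hBeq] at hprojL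
    have hppz : p ⟨ℓ - 1, hpos⟩ = (c : ℤ) := (hp _).1 rfl
    have hlow := extraCt_lower c hc1 hpos p sA qA hppz hbnd
    have hex : extraCt n ℓ hpos p sL qL = extraMin n ℓ hpos c := by
      apply extraCt_exact c hc1 hpos p sL qL hppz hbnd
      · rw [hsL]; exact extendF_pos h2 hpos _ _
      · intro t
        rw [hqL, extendF_emb, extendF_pos h2 hpos]
        have := (hqBbnd t).2
        linarith
    rw [himg]
    omega
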